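/- Let G be a finitely generated virtually abelian subgroup of PGL_{d+1}(ℂ). Then there exists a finite index subgroup G' ⊆ G such that the natural action of G' on ℙ^d(ℂ) has a fixed point. -/

import Mathlib

/-- The projective general linear group `PGL_n(ℂ) = GL_n(ℂ) / center`. -/
abbrev PGL (n : ℕ) : Type :=
  Matrix.GeneralLinearGroup (Fin n) ℂ ⧸ Subgroup.center (Matrix.GeneralLinearGroup (Fin n) ℂ)

/-!
STATEMENT 2. Let `G` be a finitely generated virtually abelian subgroup of `PGL_{d+1}(ℂ)`.
Then there is a finite index subgroup `G' ⊆ G` whose natural action on `ℙ^d(ℂ)` has a fixed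
point.  A point of `ℙ^d` is a line `ℂ·v` with `v ≠ 0`; the fixed-point condition says that
every matrix `A ∈ GL_{d+1}(ℂ)` representing an element `g` of `G'` maps `v` to a scalar
multiple of `v`.
-/
open Matrix
open scoped commutatorElement

/-- An element of the center of `GL n ℂ` is a scalar matrix. -/
lemma center_scalar {n : ℕ} {A : GL (Fin n) ℂ} (hA : A ∈ Subgroup.center (GL (Fin n) ℂ)) :
    ∃ c : ℂ, (A : Matrix (Fin n) (Fin n) ℂ) = c • 1 := by
  have key : ∀ t : TransvectionStruct (Fin n) ℂ, Commute t.toMatrix (A : Matrix (Fin n) (Fin n) ℂ) := by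
    intro t
    have hdet : IsUnit (det t.toMatrix) := by rw [t.det]; exact isUnit_one
    have := Subgroup.mem_center_iff.mp hA (Matrix.GeneralLinearGroup.mk'' _ hdet)
    have h2 := congrArg (fun X : GL (Fin n) ℂ => (X : Matrix (Fin n) (Fin n) ℂ)) this
    have h3 : (↑(Matrix.GeneralLinearGroup.mk'' _ hdet) : Matrix (Fin n) (Fin n) ℂ) = t.toMatrix := rfl
    simpa [Commute, SemiconjBy, h3] using h2
  obtain ⟨c, hc⟩ := Matrix.mem_range_scalar_of_commute_transvectionStruct key
  exact ⟨c, by rw [← hc, scalar_apply, smul_one_eq_diagonal]⟩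

/-- Commutators in a group are unchanged by central corrections. -/
lemma commutator_mul_center {Γ : Type*} [Group Γ] {a b z w : Γ}
    (hz : z ∈ Subgroup.center Γ) (hw : w ∈ Subgroup.center Γ) :
    ⁅a * z, b * w⁆ = ⁅a, b⁆ := by
  rw [Subgroup.mem_center_iff] at hz hw
  have hz' : ∀ g, z * g = g * z := fun g => (hz g).symm
  have hw' : ∀ g, w * g = g * w := fun g => (hw g).symm
  simp only [commutatorElement_def, _root_.mul_inv_rev]
  calc a * z * (b * w) * (z⁻¹ * a⁻¹) * (w⁻¹ * b⁻¹)
      = a * (z * b) * w * z⁻¹ * a⁻¹ * w⁻¹ * b⁻¹ := by group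
    _ = a * (b * z) * w * z⁻¹ * a⁻¹ * w⁻¹ * b⁻¹ := by rw [hz' b]
    _ = a * b * (z * (w * z⁻¹)) * a⁻¹ * w⁻¹ * b⁻¹ := by group
    _ = a * b * (w * z⁻¹ * z) * a⁻¹ * w⁻¹ * b⁻¹ := by rw [hz' (w * z⁻¹)]
    _ = a * b * (w * a⁻¹) * w⁻¹ * b⁻¹ := by group
    _ = a * b * (a⁻¹ * w) * w⁻¹ * b⁻¹ := by rw [hw' a⁻¹]
    _ = a * b * a⁻¹ * b⁻¹ := by group

/-- Commutators of lifts only depend on the images in `PGL`. -/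
lemma commutator_lift_eq {n : ℕ} {A B A' B' : GL (Fin n) ℂ}
    (hA : (QuotientGroup.mk A : PGL n) = QuotientGroup.mk A')
    (hB : (QuotientGroup.mk B : PGL n) = QuotientGroup.mk B') :
    ⁅A, B⁆ = ⁅A', B'⁆ := by
  rw [QuotientGroup.eq] at hA hB
  have h1 : A' = A * (A⁻¹ * A') := by group
  have h2 : B' = B * (B⁻¹ * B') := by group
  rw [h1, h2, commutator_mul_center hA hB]

open scoped Classical in
/-- The scalar associated to the commutator of (lifts of) two elements of `PGL n`. -/
noncomputable def sc {n : ℕ} (x y : PGL n) : ℂ :=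
  if h : ∃ c : ℂ, ((⁅Quotient.out x, Quotient.out y⁆ : GL (Fin n) ℂ) :
      Matrix (Fin n) (Fin n) ℂ) = c • 1 then h.choose else 1

lemma scalar_unique {n : ℕ} [NeZero n] {c c' : ℂ}
    (h : (c • 1 : Matrix (Fin n) (Fin n) ℂ) = c' • 1) : c = c' := by
  have i : Fin n := ⟨0, Nat.pos_of_ne_zero (NeZero.ne n)⟩
  have := congrFun (congrFun h i) i
  simpa [Matrix.smul_apply, Matrix.one_apply_eq] using this

lemma commutator_mem_center {n : ℕ} {A B : GL (Fin n) ℂ}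
    (h : (QuotientGroup.mk A : PGL n) * QuotientGroup.mk B
        = QuotientGroup.mk B * QuotientGroup.mk A) :
    ⁅A, B⁆ ∈ Subgroup.center (GL (Fin n) ℂ) := by
  have : (QuotientGroup.mk ⁅A, B⁆ : PGL n) = 1 := by
    have hmap := map_commutatorElement
      (QuotientGroup.mk' (Subgroup.center (GL (Fin n) ℂ))) A B
    have : (⁅(QuotientGroup.mk A : PGL n), (QuotientGroup.mk B : PGL n)⁆) = 1 :=
      commutatorElement_eq_one_iff_commute.mpr h
    exact hmap.trans this
  exact (QuotientGroup.eq_one_iff _).mp this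

lemma sc_spec {n : ℕ} {x y : PGL n} (hxy : x * y = y * x) :
    ((⁅Quotient.out x, Quotient.out y⁆ : GL (Fin n) ℂ) :
      Matrix (Fin n) (Fin n) ℂ) = sc x y • 1 := by
  have hx : (QuotientGroup.mk (Quotient.out x) : PGL n) = x := QuotientGroup.out_eq' x
  have hy : (QuotientGroup.mk (Quotient.out y) : PGL n) = y := QuotientGroup.out_eq' y
  have hc : ⁅Quotient.out x, Quotient.out y⁆ ∈ Subgroup.center (GL (Fin n) ℂ) :=
    commutator_mem_center (by rw [hx, hy]; exact hxy)
  have hex := center_scalar hc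
  rw [sc, dif_pos hex]
  exact hex.choose_spec

lemma sc_lift {n : ℕ} {x y : PGL n} {A B : GL (Fin n) ℂ}
    (hA : (QuotientGroup.mk A : PGL n) = x) (hB : (QuotientGroup.mk B : PGL n) = y)
    (hxy : x * y = y * x) :
    ((⁅A, B⁆ : GL (Fin n) ℂ) : Matrix (Fin n) (Fin n) ℂ) = sc x y • 1 := by
  have h1 : ⁅A, B⁆ = ⁅Quotient.out x, Quotient.out y⁆ :=
    commutator_lift_eq (by rw [hA, QuotientGroup.out_eq']) (by rw [hB, QuotientGroup.out_eq'])
  rw [h1]; exact sc_spec hxy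

lemma sc_eq {n : ℕ} [NeZero n] {x y : PGL n} (hxy : x * y = y * x) {A B : GL (Fin n) ℂ}
    (hA : (QuotientGroup.mk A : PGL n) = x) (hB : (QuotientGroup.mk B : PGL n) = y)
    {c : ℂ} (h : ((⁅A, B⁆ : GL (Fin n) ℂ) : Matrix (Fin n) (Fin n) ℂ) = c • 1) :
    sc x y = c :=
  scalar_unique ((sc_lift hA hB hxy).symm.trans h)

lemma sc_mul_sc {n : ℕ} [NeZero n] {x y : PGL n} (hxy : x * y = y * x) :
    sc x y * sc y x = 1 := by
  have hp := sc_spec hxy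
  have hq := sc_spec hxy.symm
  have h1 : (⁅Quotient.out x, Quotient.out y⁆ : GL (Fin n) ℂ) *
      ⁅Quotient.out y, Quotient.out x⁆ = 1 := by
    rw [← commutatorElement_inv]; exact mul_inv_cancel _
  have h2 := congrArg (fun X : GL (Fin n) ℂ => (X : Matrix (Fin n) (Fin n) ℂ)) h1
  simp only [Units.val_mul, Units.val_one] at h2
  rw [hp, hq] at h2
  refine scalar_unique (n := n) (c := sc x y * sc y x) (c' := 1) ?_
  rw [one_smul]
  conv_rhs => rw [← h2]
  rw [smul_mul_assoc, one_mul, smul_smul]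

lemma sc_ne_zero {n : ℕ} [NeZero n] {x y : PGL n} (hxy : x * y = y * x) : sc x y ≠ 0 :=
  left_ne_zero_of_mul_eq_one (sc_mul_sc hxy)

lemma sc_pow {n : ℕ} [NeZero n] {x y : PGL n} (hxy : x * y = y * x) : sc x y ^ n = 1 := by
  have hp := sc_spec hxy
  set A := Quotient.out x
  set B := Quotient.out y
  have hdet : Matrix.GeneralLinearGroup.det (⁅A, B⁆ : GL (Fin n) ℂ) = 1 := by
    rw [map_commutatorElement]
    exact commutatorElement_eq_one_iff_commute.mpr (mul_comm _ _)
  have h1 : ((⁅A, B⁆ : GL (Fin n) ℂ) : Matrix (Fin n) (Fin n) ℂ).det = 1 := by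
    exact congrArg Units.val hdet
  rw [hp] at h1
  simpa [Matrix.det_smul] using h1

lemma sc_one_right {n : ℕ} [NeZero n] (x : PGL n) : sc x 1 = 1 := by
  have hz : Quotient.out (1 : PGL n) ∈ Subgroup.center (GL (Fin n) ℂ) :=
    (QuotientGroup.eq_one_iff _).mp (QuotientGroup.out_eq' 1)
  rw [Subgroup.mem_center_iff] at hz
  have h1 : (⁅Quotient.out x, Quotient.out (1 : PGL n)⁆ : GL (Fin n) ℂ) = 1 :=
    commutatorElement_eq_one_iff_commute.mpr (hz _)
  have := sc_spec (x := x) (y := 1) (by rw [mul_one, one_mul])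
  rw [h1] at this
  refine scalar_unique (n := n) (c := sc x 1) (c' := 1) ?_
  rw [one_smul, ← this]; simp

lemma sc_one_left {n : ℕ} [NeZero n] (y : PGL n) : sc 1 y = 1 := by
  have hz : Quotient.out (1 : PGL n) ∈ Subgroup.center (GL (Fin n) ℂ) :=
    (QuotientGroup.eq_one_iff _).mp (QuotientGroup.out_eq' 1)
  rw [Subgroup.mem_center_iff] at hz
  have h1 : (⁅Quotient.out (1 : PGL n), Quotient.out y⁆ : GL (Fin n) ℂ) = 1 :=
    commutatorElement_eq_one_iff_commute.mpr (hz _).symm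
  have := sc_spec (x := (1 : PGL n)) (y := y) (by rw [mul_one, one_mul])
  rw [h1] at this
  refine scalar_unique (n := n) (c := sc 1 y) (c' := 1) ?_
  rw [one_smul, ← this]; simp

lemma sc_mul_right {n : ℕ} [NeZero n] {x y z : PGL n}
    (hxy : x * y = y * x) (hxz : x * z = z * x) :
    sc x (y * z) = sc x y * sc x z := by
  set A := Quotient.out x
  set B := Quotient.out y
  set C := Quotient.out z
  have hp := sc_spec hxy
  have hq := sc_spec hxz
  have hBC : (QuotientGroup.mk (B * C) : PGL n) = y * z := by
    rw [QuotientGroup.mk_mul, QuotientGroup.out_eq', QuotientGroup.out_eq']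
  have hxyz : x * (y * z) = (y * z) * x := by
    rw [← mul_assoc, hxy, mul_assoc, hxz, ← mul_assoc]
  refine sc_eq hxyz (QuotientGroup.out_eq' x) hBC ?_
  have hid : (⁅A, B * C⁆ : GL (Fin n) ℂ) = ⁅A, B⁆ * (B * ⁅A, C⁆ * B⁻¹) := by
    simp only [commutatorElement_def]; group
  rw [hid]
  calc ((⁅A, B⁆ * (B * ⁅A, C⁆ * B⁻¹) : GL (Fin n) ℂ) : Matrix (Fin n) (Fin n) ℂ)
      = ((⁅A, B⁆ : GL (Fin n) ℂ) : Matrix (Fin n) (Fin n) ℂ) *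
        ((B : Matrix (Fin n) (Fin n) ℂ) *
          ((⁅A, C⁆ : GL (Fin n) ℂ) : Matrix (Fin n) (Fin n) ℂ) *
          ((B⁻¹ : GL (Fin n) ℂ) : Matrix (Fin n) (Fin n) ℂ)) := by
        simp [Units.val_mul, mul_assoc]
    _ = (sc x y • 1) * ((B : Matrix (Fin n) (Fin n) ℂ) * (sc x z • 1) *
          ((B⁻¹ : GL (Fin n) ℂ) : Matrix (Fin n) (Fin n) ℂ)) := by rw [hp, hq]
    _ = (sc x y * sc x z) • 1 := by
        have hBB : (B : Matrix (Fin n) (Fin n) ℂ) *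
            ((B⁻¹ : GL (Fin n) ℂ) : Matrix (Fin n) (Fin n) ℂ) = 1 := by
          exact congrArg Units.val (mul_inv_cancel B)
        rw [mul_smul_comm, mul_one, smul_mul_assoc, one_mul, smul_mul_assoc, hBB, smul_smul]

lemma sc_mul_left {n : ℕ} [NeZero n] {x y z : PGL n}
    (hxz : x * z = z * x) (hyz : y * z = z * y) :
    sc (x * y) z = sc x z * sc y z := by
  have hxyz : (x * y) * z = z * (x * y) := by
    rw [mul_assoc, hyz, ← mul_assoc, hxz, mul_assoc]
  have h1 : sc (x * y) z * sc z (x * y) = 1 := sc_mul_sc hxyz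
  have h2 : sc z (x * y) = sc z x * sc z y := sc_mul_right hxz.symm hyz.symm
  have h3 : sc x z * sc z x = 1 := sc_mul_sc hxz
  have h4 : sc y z * sc z y = 1 := sc_mul_sc hyz
  rw [h2] at h1
  linear_combination (sc x z * sc y z) * h1 - (sc (x * y) z * sc y z * sc z y) * h3 -
    sc (x * y) z * h4

lemma coe_comm {n : ℕ} {K : Subgroup (PGL n)} (hK : ∀ a b : ↥K, a * b = b * a)
    (a b : ↥K) : (↑a : PGL n) * ↑b = ↑b * ↑a := by
  have := congrArg Subtype.val (hK a b)
  rwa [Subgroup.coe_mul, Subgroup.coe_mul] at this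

/-- The commutator scalar as a unit. -/
noncomputable def scUnit {n : ℕ} [NeZero n] {x y : PGL n} (h : x * y = y * x) : ℂˣ :=
  ⟨sc x y, sc y x, sc_mul_sc h, sc_mul_sc h.symm⟩

@[simp] lemma scUnit_val {n : ℕ} [NeZero n] {x y : PGL n} (h : x * y = y * x) :
    (scUnit h : ℂ) = sc x y := rfl

/-- The pairing `K × K → ℂˣ` given by the scalar of the commutator of lifts, bundled as a
homomorphism, for a commutative subgroup `K` of `PGL n`. -/
noncomputable def scHom {n : ℕ} [NeZero n] (K : Subgroup (PGL n))
    (hK : ∀ a b : ↥K, a * b = b * a) : ↥K →* (↥K →* ℂˣ) where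
  toFun a :=
    { toFun := fun b => scUnit (coe_comm hK a b)
      map_one' := Units.ext (by simpa using sc_one_right (K.subtype a))
      map_mul' := fun b c => Units.ext (by
        simpa using sc_mul_right (coe_comm hK a b) (coe_comm hK a c)) }
  map_one' := MonoidHom.ext fun b => Units.ext (by simpa using sc_one_left (K.subtype b))
  map_mul' a a' := MonoidHom.ext fun b => Units.ext (by
    simpa using sc_mul_left (coe_comm hK a b) (coe_comm hK a' b))

@[simp] lemma scHom_val {n : ℕ} [NeZero n] (K : Subgroup (PGL n))
    (hK : ∀ a b : ↥K, a * b = b * a) (a b : ↥K) :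
    ((scHom K hK a b : ℂˣ) : ℂ) = sc (K.subtype a) (K.subtype b) := rfl

lemma exists_common_eigenvector {n : ℕ} (S : Set (Module.End ℂ (Fin n → ℂ)))
    (hcomm : ∀ A ∈ S, ∀ B ∈ S, Commute A B) :
    ∀ k : ℕ, ∀ V : Submodule ℂ (Fin n → ℂ), Module.finrank ℂ V ≤ k → V ≠ ⊥ →
      (∀ A ∈ S, ∀ v ∈ V, A v ∈ V) →
      ∃ v ∈ V, v ≠ 0 ∧ ∀ A ∈ S, ∃ c : ℂ, A v = c • v := by
  intro k
  induction k with
  | zero =>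
    intro V hle hbot _
    exact absurd (Submodule.finrank_eq_zero.mp (Nat.le_zero.mp hle)) hbot
  | succ k ih =>
    intro V hle hbot hinv
    by_cases hsc : ∃ A ∈ S, ∃ μ : ℂ,
        (V ⊓ Module.End.eigenspace A μ) ≠ ⊥ ∧ (V ⊓ Module.End.eigenspace A μ) ≠ V
    · obtain ⟨A, hA, μ, hEbot, hEV⟩ := hsc
      set E := V ⊓ Module.End.eigenspace A μ with hE
      have hlt : E < V := lt_of_le_of_ne inf_le_left hEV
      have hfr : Module.finrank ℂ E ≤ k := by
        have := Submodule.finrank_lt_finrank_of_lt hlt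
        omega
      refine (ih E hfr hEbot ?_).imp fun v hv => ⟨le_of_lt hlt hv.1, hv.2⟩
      intro B hB v hv
      rw [hE, Submodule.mem_inf]
      refine ⟨hinv B hB v (le_of_lt hlt hv), ?_⟩
      rw [Module.End.mem_eigenspace_iff]
      have h1 : A (B v) = B (A v) := by
        have := (hcomm A hA B hB).symm
        calc A (B v) = (A * B) v := rfl
        _ = (B * A) v := by rw [← this]
        _ = B (A v) := rfl
      rw [h1, Module.End.mem_eigenspace_iff.mp (Submodule.mem_inf.mp hv).2, _root_.map_smul]
    · push_neg at hsc
      haveI : Nontrivial V := Submodule.nontrivial_iff_ne_bot.mpr hbot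
      obtain ⟨v, hvV, hv0⟩ := Submodule.exists_mem_ne_zero_of_ne_bot hbot
      refine ⟨v, hvV, hv0, fun A hA => ?_⟩
      set f : Module.End ℂ V := A.restrict (hinv A hA)
      obtain ⟨μ, hμ⟩ := Module.End.exists_eigenvalue f
      obtain ⟨w, hw⟩ := hμ.exists_hasEigenvector
      have hwE : (w : Fin n → ℂ) ∈ V ⊓ Module.End.eigenspace A μ := by
        rw [Submodule.mem_inf]
        refine ⟨w.2, ?_⟩
        rw [Module.End.mem_eigenspace_iff]
        have := hw.apply_eq_smul
        calc A (w : Fin n → ℂ) = ((f w : V) : Fin n → ℂ) := rfl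
        _ = μ • (w : Fin n → ℂ) := by rw [this]; rfl
      have hEbot : V ⊓ Module.End.eigenspace A μ ≠ ⊥ := by
        intro h
        rw [h] at hwE
        exact hw.2 (Subtype.ext (by simpa using hwE))
      have := hsc A hA μ hEbot
      have hvE : v ∈ V ⊓ Module.End.eigenspace A μ := by rw [this]; exact hvV
      exact ⟨μ, Module.End.mem_eigenspace_iff.mp (Submodule.mem_inf.mp hvE).2⟩

theorem stmt_2 (d : ℕ) (G : Subgroup (PGL (d + 1)))
    (hFG : Group.FG G)
    (hVirtAb : ∃ H : Subgroup G, H.FiniteIndex ∧ ∀ a b : H, a * b = b * a) :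
    ∃ G' : Subgroup G, G'.FiniteIndex ∧
      ∃ v : Fin (d + 1) → ℂ, v ≠ 0 ∧
        ∀ g : G', ∀ A : Matrix.GeneralLinearGroup (Fin (d + 1)) ℂ,
          (QuotientGroup.mk A : PGL (d + 1)) = ((g : G) : PGL (d + 1)) →
            ∃ c : ℂ, Matrix.mulVec (A : Matrix (Fin (d + 1)) (Fin (d + 1)) ℂ) v = c • v := by
  classical
  obtain ⟨H, hHfi, hHab⟩ := hVirtAb
  haveI : NeZero (d + 1) := ⟨Nat.succ_ne_zero d⟩
  haveI : Group.FG ↥G := hFG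
  haveI : H.FiniteIndex := hHfi
  -- the image of `H` in `PGL (d+1)`
  set K : Subgroup (PGL (d + 1)) := H.map G.subtype with hKdef
  have hKab : ∀ a b : ↥K, a * b = b * a := by
    intro a b
    obtain ⟨a', ha', haa⟩ := Subgroup.mem_map.mp a.2
    obtain ⟨b', hb', hbb⟩ := Subgroup.mem_map.mp b.2
    apply Subtype.ext
    rw [Subgroup.coe_mul, Subgroup.coe_mul, ← haa, ← hbb, ← _root_.map_mul, ← _root_.map_mul]
    have h2 : a' * b' = b' * a' := congrArg Subtype.val (hHab ⟨a', ha'⟩ ⟨b', hb'⟩)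
    rw [h2]
  set Φ := scHom K hKab with hΦdef
  -- `K` is finitely generated
  haveI : Group.FG ↥H := Subgroup.fg_of_index_ne_zero H
  haveI hKfg : Group.FG ↥K :=
    Group.fg_of_surjective
      (f := (H.equivMapOfInjective G.subtype G.subtype_injective).toMonoidHom)
      (MulEquiv.surjective _)
  obtain ⟨T, hTtop, hTfin⟩ := Group.fg_iff.mp hKfg
  haveI : Finite ↥T := hTfin.to_subtype
  -- the range of `Φ` is finite
  have hpow : ∀ ψ : ↥Φ.range, ∀ b : ↥K, (ψ.1 b) ^ (d + 1) = 1 := by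
    rintro ⟨ψ, a, rfl⟩ b
    refine Units.ext ?_
    rw [Units.val_pow_eq_pow_val, Units.val_one]
    have : ((Φ a b : ℂˣ) : ℂ) = sc (K.subtype a) (K.subtype b) := scHom_val K hKab a b
    rw [this]
    exact sc_pow (coe_comm hKab a b)
  let j : ↥Φ.range → (↥T → rootsOfUnity (d + 1) ℂ) := fun ψ t =>
    ⟨ψ.1 t.1, (mem_rootsOfUnity _ _).mpr (hpow ψ t.1)⟩
  have hjinj : Function.Injective j := by
    intro ψ ψ' h
    refine Subtype.ext (MonoidHom.eq_of_eqOn_dense hTtop ?_)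
    intro t ht
    have := congrFun h ⟨t, ht⟩
    exact Subtype.ext_iff.mp this
  haveI : Finite ↥Φ.range := Finite.of_injective j hjinj
  -- the kernel of `Φ`, pushed into `PGL`, and the subgroup `G'`
  set J : Subgroup (PGL (d + 1)) := Φ.ker.map K.subtype with hJdef
  refine ⟨J.subgroupOf G, ?_, ?_⟩
  · constructor
    have hJK : J ≤ K := Subgroup.map_subtype_le _
    have hKG : K ≤ G := Subgroup.map_subtype_le _
    have e1 : J.subgroupOf K = Φ.ker :=
      Subgroup.comap_map_eq_self_of_injective K.subtype_injective _
    have e2 : K.subgroupOf G = H :=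
      Subgroup.comap_map_eq_self_of_injective G.subtype_injective _
    have h1 : J.relIndex K ≠ 0 := by
      rw [Subgroup.relIndex, e1, Subgroup.index_ker]
      exact Nat.card_ne_zero.mpr ⟨⟨1⟩, inferInstance⟩
    have h2 : K.relIndex G ≠ 0 := by
      rw [Subgroup.relIndex, e2]
      exact hHfi.index_ne_zero
    have : (J.subgroupOf G).index = J.relIndex G := rfl
    rw [this, ← Subgroup.relIndex_mul_relIndex J K G hJK hKG]
    exact Nat.mul_ne_zero h1 h2
  · -- common eigenvector
    have hGLcomm : ∀ A B : Matrix.GeneralLinearGroup (Fin (d + 1)) ℂ,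
        (QuotientGroup.mk A : PGL (d + 1)) ∈ J → (QuotientGroup.mk B : PGL (d + 1)) ∈ J →
        A * B = B * A := by
      intro A B hA hB
      obtain ⟨a, ha, haa⟩ := Subgroup.mem_map.mp hA
      obtain ⟨b, hb, hbb⟩ := Subgroup.mem_map.mp hB
      have hsc : sc (K.subtype a) (K.subtype b) = 1 := by
        have h1 : Φ a = 1 := ha
        have := scHom_val K hKab a b
        rw [← hΦdef, h1] at this
        simpa using this.symm
      have hval := sc_lift (n := d + 1) haa.symm hbb.symm (coe_comm hKab a b)
      rw [hsc, one_smul] at hval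
      have : (⁅A, B⁆ : Matrix.GeneralLinearGroup (Fin (d + 1)) ℂ) = 1 := Units.ext hval
      exact (commutatorElement_eq_one_iff_commute.mp this).eq
    set S : Set (Module.End ℂ (Fin (d + 1) → ℂ)) :=
      (fun A : Matrix.GeneralLinearGroup (Fin (d + 1)) ℂ =>
        Matrix.mulVecLin (A : Matrix (Fin (d + 1)) (Fin (d + 1)) ℂ)) ''
        {A | (QuotientGroup.mk A : PGL (d + 1)) ∈ J} with hSdef
    have hScomm : ∀ f ∈ S, ∀ g ∈ S, Commute f g := by
      rintro - ⟨A, hA, rfl⟩ - ⟨B, hB, rfl⟩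
      have hAB : (A : Matrix (Fin (d + 1)) (Fin (d + 1)) ℂ) * B = (B : _) * A :=
        congrArg Units.val (hGLcomm A B hA hB)
      show _ * _ = _ * _
      rw [Module.End.mul_eq_comp, Module.End.mul_eq_comp, ← Matrix.mulVecLin_mul,
        ← Matrix.mulVecLin_mul, hAB]
    have htopbot : (⊤ : Submodule ℂ (Fin (d + 1) → ℂ)) ≠ ⊥ := by
      refine Submodule.ne_bot_iff _ |>.mpr ⟨fun _ => 1, Submodule.mem_top, ?_⟩
      intro h
      exact one_ne_zero (congrFun h 0)
    obtain ⟨v, -, hv0, hv⟩ := exists_common_eigenvector S hScomm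
      (Module.finrank ℂ (Fin (d + 1) → ℂ)) ⊤
      (le_of_eq (finrank_top ℂ _)) htopbot (fun A hA w hw => Submodule.mem_top)
    refine ⟨v, hv0, ?_⟩
    intro g A hA
    have hmk : (QuotientGroup.mk A : PGL (d + 1)) ∈ J := by
      rw [hA]
      exact Subgroup.mem_subgroupOf.mp g.2
    obtain ⟨c, hc⟩ := hv _ ⟨A, hmk, rfl⟩
    exact ⟨c, by simpa [Matrix.mulVecLin_apply] using hc⟩
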